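/- If Γ' is a sublattice of Γ ⊆ ℝ^d of index m and R ∈ OS(Γ) = OS(Γ'), then m·Scal_Γ(R) ⊆ Scal_{Γ'}(R) ⊆ (1/m)·Scal_Γ(R). Consequently, m·den_Γ(R)/den_{Γ'}(R) ∈ ℕ and m·den_{Γ'}(R)/den_Γ(R) ∈ ℕ. -/

import Mathlib

noncomputable section

abbrev Euc (d : ℕ) : Type := EuclideanSpace ℝ (Fin d)

/-- Γ is a (full-rank) lattice in ℝ^d: the ℤ-span of an ℝ-basis of ℝ^d. -/
def IsLattice {d : ℕ} (Γ : AddSubgroup (Euc d)) : Prop :=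
  ∃ b : Module.Basis (Fin d) ℝ (Euc d),
    Γ = (Submodule.span ℤ (Set.range ⇑b)).toAddSubgroup

/-- Two subgroups are commensurate if their intersection has finite index in both. -/
def Commensurate {d : ℕ} (Γ₁ Γ₂ : AddSubgroup (Euc d)) : Prop :=
  ((Γ₁ ⊓ Γ₂).addSubgroupOf Γ₁).FiniteIndex ∧ ((Γ₁ ⊓ Γ₂).addSubgroupOf Γ₂).FiniteIndex

/-- The image α·R(Γ) of Γ under the similarity transformation αR. -/
def simMap {d : ℕ} (α : ℝ) (R : Euc d ≃ₗᵢ[ℝ] Euc d) (Γ : AddSubgroup (Euc d)) :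
    AddSubgroup (Euc d) :=
  Γ.map (α • R.toLinearEquiv.toLinearMap).toAddMonoidHom

/-- The image R(Γ). -/
def rotMap {d : ℕ} (R : Euc d ≃ₗᵢ[ℝ] Euc d) (Γ : AddSubgroup (Euc d)) :
    AddSubgroup (Euc d) :=
  Γ.map R.toLinearEquiv.toLinearMap.toAddMonoidHom

/-- The set of similarity isometries of Γ. -/
def OSset {d : ℕ} (Γ : AddSubgroup (Euc d)) : Set (Euc d ≃ₗᵢ[ℝ] Euc d) :=
  {R | ∃ α : ℝ, 0 < α ∧ simMap α R Γ ≤ Γ}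

/-- The set of scaling factors of R, Scal_Γ(R) = {α : αRΓ ⊆ Γ}. -/
def Scal {d : ℕ} (Γ : AddSubgroup (Euc d)) (R : Euc d ≃ₗᵢ[ℝ] Euc d) : Set ℝ :=
  {α | simMap α R Γ ≤ Γ}

/-- δ is the denominator of R: the smallest positive element of Scal Γ R. -/
def IsDen {d : ℕ} (Γ : AddSubgroup (Euc d)) (R : Euc d ≃ₗᵢ[ℝ] Euc d) (δ : ℝ) : Prop :=
  0 < δ ∧ δ ∈ Scal Γ R ∧ ∀ β : ℝ, 0 < β → β ∈ Scal Γ R → δ ≤ β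

/-- The set of coincidence isometries of Γ. -/
def OCset {d : ℕ} (Γ : AddSubgroup (Euc d)) : Set (Euc d ≃ₗᵢ[ℝ] Euc d) :=
  {R | Commensurate Γ (rotMap R Γ)}

/-- The coincidence index Σ_Γ(R) = [Γ : Γ ∩ RΓ]. -/
def coinIndex {d : ℕ} (Γ : AddSubgroup (Euc d)) (R : Euc d ≃ₗᵢ[ℝ] Euc d) : ℕ :=
  (rotMap R Γ).relIndex Γ

/-- The coincidence site lattice Γ(R) = Γ ∩ RΓ. -/
def CSL {d : ℕ} (Γ : AddSubgroup (Euc d)) (R : Euc d ≃ₗᵢ[ℝ] Euc d) :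
    AddSubgroup (Euc d) :=
  Γ ⊓ rotMap R Γ

/-- The dual lattice Γ* = {x : ⟨x,y⟩ ∈ ℤ for all y ∈ Γ}. -/
def dualLattice {d : ℕ} (Γ : AddSubgroup (Euc d)) : AddSubgroup (Euc d) where
  carrier := {x | ∀ y ∈ Γ, ∃ n : ℤ, (inner ℝ x y : ℝ) = (n : ℝ)}
  zero_mem' := by
    intro y hy
    exact ⟨0, by simp⟩
  add_mem' := by
    intro a b ha hb y hy
    obtain ⟨n, hn⟩ := ha y hy
    obtain ⟨m, hm⟩ := hb y hy
    exact ⟨n + m, by rw [inner_add_left, hn, hm]; push_cast; ring⟩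
  neg_mem' := by
    intro a ha y hy
    obtain ⟨n, hn⟩ := ha y hy
    exact ⟨-n, by rw [inner_neg_left, hn]; push_cast; ring⟩

lemma mem_scal_iff {d : ℕ} {Γ : AddSubgroup (Euc d)} {R : Euc d ≃ₗᵢ[ℝ] Euc d} {α : ℝ} :
    α ∈ Scal Γ R ↔ ∀ x ∈ Γ, α • R x ∈ Γ := by
  simp [Scal, simMap, AddSubgroup.map_le_iff_le_comap, SetLike.le_def]

lemma nsmul_mem_of_relindex {d : ℕ} {Γ Γ' : AddSubgroup (Euc d)} (hsub : Γ' ≤ Γ)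
    {m : ℕ} (hm : Γ'.relIndex Γ = m) {x : Euc d} (hx : x ∈ Γ) : m • x ∈ Γ' := by
  have h := (Γ'.addSubgroupOf Γ).nsmul_index_mem ⟨x, hx⟩
  rw [AddSubgroup.mem_addSubgroupOf] at h
  rw [← hm]
  exact h

lemma exists_nat_mul_den {d : ℕ} {Γ' : AddSubgroup (Euc d)} {R : Euc d ≃ₗᵢ[ℝ] Euc d}
    {δ' β : ℝ} (hδ' : IsDen Γ' R δ') (hβpos : 0 < β) (hβ : β ∈ Scal Γ' R) :
    ∃ k : ℕ, 0 < k ∧ β = (k : ℝ) * δ' := by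
  obtain ⟨hδpos, hδmem, hδmin⟩ := hδ'
  set k : ℤ := ⌊β / δ'⌋ with hk
  have hk0 : 0 ≤ k := Int.le_floor.mpr (by push_cast; positivity)
  have hlow : (k : ℝ) * δ' ≤ β := by
    have := Int.floor_le (β / δ')
    calc (k : ℝ) * δ' ≤ (β / δ') * δ' := by nlinarith
    _ = β := by field_simp
  have hhigh : β < ((k : ℝ) + 1) * δ' := by
    have := Int.lt_floor_add_one (β / δ')
    calc β = (β / δ') * δ' := by field_simp
    _ < ((k : ℝ) + 1) * δ' := by nlinarith
  have hr : β - (k : ℝ) * δ' ∈ Scal Γ' R := by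
    rw [mem_scal_iff]
    intro x hx
    have h1 : β • R x ∈ Γ' := mem_scal_iff.mp hβ x hx
    have h2 : δ' • R x ∈ Γ' := mem_scal_iff.mp hδmem x hx
    have h3 : k • (δ' • R x) ∈ Γ' := zsmul_mem h2 k
    have : (β - (k : ℝ) * δ') • R x = β • R x - k • (δ' • R x) := by
      rw [← Int.cast_smul_eq_zsmul ℝ, smul_smul, sub_smul]
    rw [this]
    exact sub_mem h1 h3
  have hr0 : β - (k : ℝ) * δ' = 0 := by
    by_contra h
    have hrpos : 0 < β - (k : ℝ) * δ' := lt_of_le_of_ne (by linarith) (Ne.symm h)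
    have := hδmin _ hrpos hr
    nlinarith
  have hβeq : β = (k : ℝ) * δ' := by linarith
  have hkpos : 0 < k := by
    rcases hk0.lt_or_eq with h | h
    · exact h
    · exfalso; rw [← h] at hβeq; simp at hβeq; linarith
  exact ⟨k.toNat, by omega, by rw [hβeq]; congr 1; exact_mod_cast (Int.toNat_of_nonneg hk0).symm⟩

theorem scal_sublattice_comparison {d : ℕ} (Γ Γ' : AddSubgroup (Euc d))
    (hΓ : IsLattice Γ) (hΓ' : IsLattice Γ') (hsub : Γ' ≤ Γ)
    (m : ℕ) (hm : Γ'.relIndex Γ = m) (hm0 : 0 < m)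
    (R : Euc d ≃ₗᵢ[ℝ] Euc d) :
    (∀ α ∈ Scal Γ R, (m : ℝ) * α ∈ Scal Γ' R) ∧
    (∀ α ∈ Scal Γ' R, (m : ℝ) * α ∈ Scal Γ R) ∧
    (∀ δ δ' : ℝ, IsDen Γ R δ → IsDen Γ' R δ' →
      (∃ k : ℕ, 0 < k ∧ (m : ℝ) * δ = (k : ℝ) * δ') ∧
      (∃ k : ℕ, 0 < k ∧ (m : ℝ) * δ' = (k : ℝ) * δ)) := by
  have key1 : ∀ α ∈ Scal Γ R, (m : ℝ) * α ∈ Scal Γ' R := by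
    intro α hα
    rw [mem_scal_iff]
    intro x hx
    have h1 : α • R x ∈ Γ := mem_scal_iff.mp hα x (hsub hx)
    have h2 : m • (α • R x) ∈ Γ' := nsmul_mem_of_relindex hsub hm h1
    have : ((m : ℝ) * α) • R x = m • (α • R x) := by
      rw [← Nat.cast_smul_eq_nsmul ℝ, smul_smul]
    rw [this]; exact h2
  have key2 : ∀ α ∈ Scal Γ' R, (m : ℝ) * α ∈ Scal Γ R := by
    intro α hα
    rw [mem_scal_iff]
    intro x hx
    have hmx : m • x ∈ Γ' := nsmul_mem_of_relindex hsub hm hx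
    have h1 : α • R (m • x) ∈ Γ' := mem_scal_iff.mp hα _ hmx
    have : ((m : ℝ) * α) • R x = α • R (m • x) := by
      rw [map_nsmul, ← Nat.cast_smul_eq_nsmul ℝ, smul_smul, mul_comm]
    rw [this]; exact hsub h1
  refine ⟨key1, key2, ?_⟩
  intro δ δ' hδ hδ'
  have hmpos : (0 : ℝ) < m := by exact_mod_cast hm0
  constructor
  · exact exists_nat_mul_den hδ' (by nlinarith [hδ.1]) (key1 δ hδ.2.1)
  · have := exists_nat_mul_den (Γ' := Γ) hδ (by nlinarith [hδ'.1]) (key2 δ' hδ'.2.1)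
    exact this
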